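/- Let μ ≥ 0, R > 0, and let ε̄ ∈ [0,1] be such that ε̄ + μ/R ≤ 1. If a probability measure ℙ satisfies ℙ(A_R) ≤ ε̄, where A_R is the R-enlargement of a violation set A, and ℙ' is any probability measure with Wasserstein-type distance d_W(ℙ, ℙ') ≤ μ where d_W is defined via couplings with squared-norm cost, then ℙ'(A) ≤ ε̄ + μ/R — provided the cost of transporting any point of A to the complement of A_R is at least R. (Simplified core inequality underlying Theorem 1.) -/
import Mathlib


open MeasureTheory
open scoped ENNReal

/-- If `ℙ(A_R) ≤ ε̄` where `A_R = {x | ∃ a ∈ A, ‖x-a‖² < R}`, and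
`ℙ'` has Wasserstein-type distance (squared-norm transport cost, infimum over
couplings) at most `μ` from `ℙ`, then `ℙ'(A) ≤ ε̄ + μ/R`, provided transporting
any point of `A` to the complement of `A_R` costs at least `R`. -/
theorem stmt13 {X : Type*} [NormedAddCommGroup X] [MeasurableSpace X]
    (P P' : Measure X) [IsProbabilityMeasure P] [IsProbabilityMeasure P']
    (A : Set X) (hA : MeasurableSet A)
    (μ R ε : ℝ) (hμ : 0 ≤ μ) (hR : 0 < R) (hε0 : 0 ≤ ε) (hε1 : ε ≤ 1)
    (hsum : ε + μ / R ≤ 1)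
    (AR : Set X) (hAR : AR = {x : X | ∃ a ∈ A, ‖x - a‖ ^ 2 < R})
    (hPAR : (P AR).toReal ≤ ε)
    (hcost : ∀ x y : X, y ∈ A → x ∉ AR → R ≤ ‖x - y‖ ^ 2)
    (hW : sInf {c : ℝ≥0∞ | ∃ Q : Measure (X × X),
        IsProbabilityMeasure Q ∧
        Q.map Prod.fst = P ∧ Q.map Prod.snd = P' ∧
        c = ∫⁻ p, ENNReal.ofReal (‖p.1 - p.2‖ ^ 2) ∂Q}
      ≤ ENNReal.ofReal μ) :
    (P' A).toReal ≤ ε + μ / R := by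
  set B : Set X := toMeasurable P AR with hB
  have hBmeas : MeasurableSet B := measurableSet_toMeasurable P AR
  have hARB : AR ⊆ B := subset_toMeasurable P AR
  have hPB : P B = P AR := measure_toMeasurable AR
  have hRne : ENNReal.ofReal R ≠ 0 := by
    simp [ENNReal.ofReal_eq_zero, not_le, hR]
  have hRnt : ENNReal.ofReal R ≠ ⊤ := ENNReal.ofReal_ne_top
  -- key coupling estimate
  have key : ∀ c ∈ {c : ℝ≥0∞ | ∃ Q : Measure (X × X),
        IsProbabilityMeasure Q ∧
        Q.map Prod.fst = P ∧ Q.map Prod.snd = P' ∧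
        c = ∫⁻ p, ENNReal.ofReal (‖p.1 - p.2‖ ^ 2) ∂Q},
      P' A ≤ ENNReal.ofReal ε + c / ENNReal.ofReal R := by
    rintro c ⟨Q, hQprob, hQ1, hQ2, rfl⟩
    set S : Set (X × X) := Bᶜ ×ˢ A with hS
    have hSmeas : MeasurableSet S := hBmeas.compl.prod hA
    -- cost lower bound on S
    have hbound : ENNReal.ofReal R * Q S
        ≤ ∫⁻ p, ENNReal.ofReal (‖p.1 - p.2‖ ^ 2) ∂Q := by
      have : ∫⁻ p, S.indicator (fun _ => ENNReal.ofReal R) p ∂Q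
          ≤ ∫⁻ p, ENNReal.ofReal (‖p.1 - p.2‖ ^ 2) ∂Q := by
        refine lintegral_mono fun p => ?_
        by_cases hp : p ∈ S
        · simp only [Set.indicator_of_mem hp]
          refine ENNReal.ofReal_le_ofReal ?_
          exact hcost p.1 p.2 hp.2 (fun h => hp.1 (hARB h))
        · simp [Set.indicator_of_notMem hp]
      rwa [lintegral_indicator_const hSmeas] at this
    have hQS : Q S ≤ (∫⁻ p, ENNReal.ofReal (‖p.1 - p.2‖ ^ 2) ∂Q) / ENNReal.ofReal R := by
      rw [ENNReal.le_div_iff_mul_le (Or.inl hRne) (Or.inl hRnt)]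
      calc Q S * ENNReal.ofReal R = ENNReal.ofReal R * Q S := mul_comm _ _
        _ ≤ _ := hbound
    -- split
    have hsub : (Prod.snd ⁻¹' A : Set (X × X)) ⊆ (Prod.fst ⁻¹' B) ∪ S := by
      intro p hp
      by_cases hpB : p.1 ∈ B
      · exact Or.inl hpB
      · exact Or.inr ⟨hpB, hp⟩
    have hP'A : P' A = Q (Prod.snd ⁻¹' A) := by
      rw [← hQ2, Measure.map_apply measurable_snd hA]
    have hPBQ : Q (Prod.fst ⁻¹' B) = P B := by
      rw [← hQ1, Measure.map_apply measurable_fst hBmeas]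
    have hPBe : P B ≤ ENNReal.ofReal ε := by
      rw [hPB]
      exact (ENNReal.le_ofReal_iff_toReal_le (measure_ne_top P AR) hε0).2 hPAR
    calc P' A = Q (Prod.snd ⁻¹' A) := hP'A
      _ ≤ Q ((Prod.fst ⁻¹' B) ∪ S) := measure_mono hsub
      _ ≤ Q (Prod.fst ⁻¹' B) + Q S := measure_union_le _ _
      _ ≤ ENNReal.ofReal ε
          + (∫⁻ p, ENNReal.ofReal (‖p.1 - p.2‖ ^ 2) ∂Q) / ENNReal.ofReal R := by
          exact add_le_add (hPBQ ▸ hPBe) hQS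
  -- pass to the infimum
  have main : P' A ≤ ENNReal.ofReal ε + ENNReal.ofReal μ / ENNReal.ofReal R := by
    refine ENNReal.le_of_forall_pos_le_add fun η hη htop => ?_
    have hδpos : (0 : ℝ≥0∞) < (η : ℝ≥0∞) * ENNReal.ofReal R := by
      refine ENNReal.mul_pos ?_ hRne
      exact_mod_cast hη.ne'
    have hne : {c : ℝ≥0∞ | ∃ Q : Measure (X × X),
        IsProbabilityMeasure Q ∧ Q.map Prod.fst = P ∧ Q.map Prod.snd = P' ∧
        c = ∫⁻ p, ENNReal.ofReal (‖p.1 - p.2‖ ^ 2) ∂Q}.Nonempty := by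
      by_contra h
      rw [Set.not_nonempty_iff_eq_empty] at h
      rw [h, sInf_empty] at hW
      exact absurd (lt_of_le_of_lt hW ENNReal.ofReal_lt_top) (lt_irrefl ⊤)
    have hlt : sInf {c : ℝ≥0∞ | ∃ Q : Measure (X × X),
        IsProbabilityMeasure Q ∧ Q.map Prod.fst = P ∧ Q.map Prod.snd = P' ∧
        c = ∫⁻ p, ENNReal.ofReal (‖p.1 - p.2‖ ^ 2) ∂Q}
        < ENNReal.ofReal μ + (η : ℝ≥0∞) * ENNReal.ofReal R :=
      lt_of_le_of_lt hW (ENNReal.lt_add_right ENNReal.ofReal_ne_top hδpos.ne')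
    obtain ⟨c, hc, hc2⟩ := exists_lt_of_csInf_lt hne hlt
    calc P' A ≤ ENNReal.ofReal ε + c / ENNReal.ofReal R := key c hc
      _ ≤ ENNReal.ofReal ε
          + (ENNReal.ofReal μ + (η : ℝ≥0∞) * ENNReal.ofReal R) / ENNReal.ofReal R := by
          gcongr ?_ + ?_ / _ <;> first | rfl | exact hc2.le
      _ = ENNReal.ofReal ε + ENNReal.ofReal μ / ENNReal.ofReal R + η := by
          rw [ENNReal.add_div, mul_div_assoc, ENNReal.div_self hRne hRnt, mul_one, add_assoc]
  have hdiv : ENNReal.ofReal μ / ENNReal.ofReal R = ENNReal.ofReal (μ / R) :=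
    (ENNReal.ofReal_div_of_pos hR).symm
  have : P' A ≤ ENNReal.ofReal (ε + μ / R) := by
    rw [ENNReal.ofReal_add hε0 (div_nonneg hμ hR.le)]
    rw [hdiv] at main
    exact main
  exact ENNReal.toReal_le_of_le_ofReal (by positivity) this
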